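/- Let x be a nilpotent endomorphism of a finite-dimensional complex vector space V with Jordan type λ, and let L ⊆ ker(x) be a one-dimensional subspace. If j is maximal such that L ⊆ ker(x) ∩ im(x^{j-1}), then the Jordan type of the induced endomorphism of V/L is the partition obtained from λ by removing one box from the bottom of the j-th column (i.e., decreasing by 1 the smallest part of λ that is ≥ j). -/

import Mathlib

open Module LinearMap

private lemma finrank_map_add_finrank_inf_ker {K V V₂ : Type*} [Field K]
    [AddCommGroup V] [Module K V] [FiniteDimensional K V]
    [AddCommGroup V₂] [Module K V₂] (f : V →ₗ[K] V₂) (p : Submodule K V) :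
    finrank K (p.map f) + finrank K ↥(p ⊓ LinearMap.ker f) = finrank K p := by
  have h := LinearMap.finrank_range_add_finrank_ker (f.domRestrict p)
  rw [LinearMap.range_domRestrict, LinearMap.ker_domRestrict] at h
  have e : finrank K ↥(p ⊓ LinearMap.ker f)
      = finrank K ↥((LinearMap.ker f).comap p.subtype) := by
    rw [← Submodule.map_comap_subtype, Submodule.finrank_map_subtype_eq]
  rw [e, h]

/-- Let `x` be a nilpotent endomorphism of a finite-dimensional complex
vector space `V` and `L ⊆ ker x` a line.  If `j ≥ 1` is maximal such that
`L ⊆ ker x ∩ im (x^(j-1))`, then the Jordan type of the induced endomorphism of `V/L`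
is obtained from that of `x` by removing the box at the bottom of the `j`-th column.
(Equivalently, since Jordan types are determined by the dimensions of kernels of powers:
`dim ker(x̄^k) = dim ker(x^k) - 1` for `k ≥ j` and `= dim ker(x^k)` for `k < j`.) -/
theorem jordanType_quotient_by_line
    (V : Type*) [AddCommGroup V] [Module ℂ V] [FiniteDimensional ℂ V]
    (x : Module.End ℂ V) (hx : IsNilpotent x)
    (L : Submodule ℂ V) (hL1 : Module.finrank ℂ L = 1)
    (hLker : L ≤ LinearMap.ker x)
    (j : ℕ) (hj : 1 ≤ j)
    (hjle : L ≤ LinearMap.range (x ^ (j - 1)))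
    (hjmax : ¬ L ≤ LinearMap.range (x ^ j))
    (hmap : L ≤ L.comap x) :
    ∀ k : ℕ,
      Module.finrank ℂ (LinearMap.ker ((Submodule.mapQ L L x hmap) ^ k)) =
        Module.finrank ℂ (LinearMap.ker (x ^ k)) - (if j ≤ k then 1 else 0) := by
  intro k
  rcases Nat.eq_zero_or_pos k with rfl | hk
  · have hj0 : ¬ j ≤ 0 := by omega
    rw [if_neg hj0, Nat.sub_zero, pow_zero, pow_zero]
    simp [Module.End.one_eq_id, LinearMap.ker_id]
    exact (finrank_bot ℂ _).trans (finrank_bot ℂ _).symm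
  -- k ≥ 1
  obtain ⟨k', rfl⟩ : ∃ k', k = k' + 1 := ⟨k - 1, by omega⟩
  set k := k' + 1
  set W : Submodule ℂ V := L.comap (x ^ k) with hW
  have hLW : L ≤ W := by
    intro v hv
    have hxv : x v = 0 := hLker hv
    show (x ^ k) v ∈ L
    rw [pow_succ, Module.End.mul_apply, hxv, map_zero]
    exact L.zero_mem
  have hkerW : LinearMap.ker (x ^ k) ≤ W := by
    intro v hv
    show (x ^ k) v ∈ L
    rw [hv]; exact L.zero_mem
  -- identify the kernel of the quotient map power
  rw [← Submodule.mapQ_pow L hmap k]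
  have hker : LinearMap.ker (Submodule.mapQ L L (x ^ k)
      (L.le_comap_pow_of_le_comap hmap k)) = W.map L.mkQ := by
    have h := Submodule.ker_liftQ L (L.mkQ.comp (x ^ k))
      (by rw [LinearMap.ker_comp, Submodule.ker_mkQ]
          exact L.le_comap_pow_of_le_comap hmap k)
    simp only [LinearMap.ker_comp, Submodule.ker_mkQ] at h
    exact h
  rw [hker]
  -- dimension count for the quotient kernel
  have hA := finrank_map_add_finrank_inf_ker L.mkQ W
  rw [Submodule.ker_mkQ, inf_eq_right.mpr hLW, hL1] at hA
  -- dimension count for W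
  have hB := finrank_map_add_finrank_inf_ker (x ^ k) W
  rw [hW, Submodule.map_comap_eq, inf_eq_right.mpr hkerW] at hB
  -- the intersection L ⊓ range (x^k)
  have hrange : ∀ a b : ℕ, a ≤ b →
      LinearMap.range (x ^ b) ≤ LinearMap.range (x ^ a) := by
    intro a b hab
    have : x ^ b = (x ^ a).comp (x ^ (b - a)) := by
      rw [← Module.End.mul_eq_comp, ← pow_add]
      congr 1; omega
    rw [this]
    exact LinearMap.range_comp_le_range _ _
  have hS : finrank ℂ ↥(LinearMap.range (x ^ k) ⊓ L) = if j ≤ k then 0 else 1 := by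
    by_cases hjk : j ≤ k
    · rw [if_pos hjk]
      by_contra hne
      have hle : LinearMap.range (x ^ k) ⊓ L ≤ L := inf_le_right
      have h1 : finrank ℂ ↥(LinearMap.range (x ^ k) ⊓ L) ≤ 1 := by
        have := Submodule.finrank_mono hle
        omega
      have h1' : finrank ℂ ↥(LinearMap.range (x ^ k) ⊓ L) = 1 := by omega
      have heq : LinearMap.range (x ^ k) ⊓ L = L :=
        Submodule.eq_of_le_of_finrank_eq hle (by rw [h1', hL1])
      have : L ≤ LinearMap.range (x ^ j) :=
        le_trans (le_trans (heq.symm.le.trans inf_le_left) (hrange j k hjk)) le_rfl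
      exact hjmax this
    · rw [if_neg hjk]
      have hkj : k ≤ j - 1 := by omega
      have hLr : L ≤ LinearMap.range (x ^ k) :=
        le_trans hjle (hrange k (j - 1) hkj)
      rw [inf_eq_right.mpr hLr, hL1]
  rw [hS] at hB
  -- the kernel of x^k contains L when j ≤ k (needed for the subtraction)
  have hLk : L ≤ LinearMap.ker (x ^ k) := fun v hv => by
    have hxv : x v = 0 := hLker hv
    show (x ^ k) v = 0
    rw [pow_succ, Module.End.mul_apply, hxv, map_zero]
  have hkpos : 1 ≤ finrank ℂ (LinearMap.ker (x ^ k)) := by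
    have := Submodule.finrank_mono hLk
    omega
  rw [← hW] at hB
  by_cases hjk : j ≤ k
  · rw [if_pos hjk] at hB ⊢
    omega
  · rw [if_neg hjk] at hB ⊢
    omega
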